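/- The fixed point of the policy Bellman operator equals the discounted sum of expected stage costs along the induced Markov chain: for every stochastic policy π and every (s,a) ∈ S × A, defining the state-action transition kernel K_π : S × A → PMF (S × A) by K_π(s,a) = (P s a).bind (fun s' => (π s').map (fun a' => (s', a'))) and the distributions μ_0 = PMF.pure (s,a), μ_{k+1} = μ_k.bind K_π, the series ∑_{k=0}^∞ γ^k · (∑_{(s',a')} μ_k (s',a') · l(s',a')) is summable and its sum equals Q^π(s,a). -/

import Mathlib

open Finset

noncomputable def pexp {α : Type*} [Fintype α] (μ : PMF α) (f : α → ℝ) : ℝ :=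
  ∑ x, (μ x).toReal * f x

lemma pexp_pure {α : Type*} [Fintype α] (a : α) (f : α → ℝ) :
    pexp (PMF.pure a) f = f a := by
  simp [pexp, PMF.pure_apply]
  rw [Finset.sum_eq_single a] <;> simp +contextual [eq_comm]

lemma pexp_bind {α β : Type*} [Fintype α] [Fintype β] (p : PMF α) (q : α → PMF β)
    (f : β → ℝ) : pexp (p.bind q) f = ∑ x, (p x).toReal * pexp (q x) f := by
  simp only [pexp, PMF.bind_apply, Finset.mul_sum]
  rw [Finset.sum_comm]
  refine Finset.sum_congr rfl fun y _ => ?_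
  rw [tsum_fintype, ENNReal.toReal_sum (by
    intro x _; exact (ENNReal.mul_ne_top (PMF.apply_ne_top p x) (PMF.apply_ne_top (q x) y))),
    Finset.sum_mul]
  refine Finset.sum_congr rfl fun x _ => ?_
  rw [ENNReal.toReal_mul]; ring

lemma pexp_map {α β : Type*} [Fintype α] [Fintype β] (p : PMF α) (g : α → β)
    (f : β → ℝ) : pexp (p.map g) f = pexp p (fun x => f (g x)) := by
  rw [PMF.map, pexp_bind]
  refine Finset.sum_congr rfl fun x _ => ?_
  simp only [Function.comp_apply, pexp_pure]

lemma pexp_sum_one {α : Type*} [Fintype α] (μ : PMF α) :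
    ∑ x, (μ x).toReal = 1 := by
  rw [← ENNReal.toReal_sum (fun x _ => PMF.apply_ne_top μ x), ← tsum_fintype (L := .unconditional _),
    PMF.tsum_coe, ENNReal.toReal_one]

lemma pexp_abs_le {α : Type*} [Fintype α] [Nonempty α] (μ : PMF α) (f : α → ℝ)
    (M : ℝ) (hM : ∀ x, |f x| ≤ M) : |pexp μ f| ≤ M := by
  calc |pexp μ f| ≤ ∑ x, |(μ x).toReal * f x| := Finset.abs_sum_le_sum_abs _ _
    _ ≤ ∑ x, (μ x).toReal * M := by
        refine Finset.sum_le_sum fun x _ => ?_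
        rw [abs_mul, abs_of_nonneg ENNReal.toReal_nonneg]
        exact mul_le_mul_of_nonneg_left (hM x) ENNReal.toReal_nonneg
    _ = M := by rw [← Finset.sum_mul, pexp_sum_one, one_mul]

lemma pexp_add {α : Type*} [Fintype α] (μ : PMF α) (f g : α → ℝ) :
    pexp μ (fun x => f x + g x) = pexp μ f + pexp μ g := by
  simp [pexp, mul_add, Finset.sum_add_distrib]

lemma pexp_const_mul {α : Type*} [Fintype α] (μ : PMF α) (c : ℝ) (f : α → ℝ) :
    pexp μ (fun x => c * f x) = c * pexp μ f := by
  simp only [pexp, Finset.mul_sum]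
  exact Finset.sum_congr rfl fun x _ => by ring





/-- The policy Bellman operator `T^π` on action-value functions for a finite
discounted MDP: `(T^π Q)(s,a) = l(s,a) + γ ∑_{s'} P(s'|s,a) ∑_{a'} π(a'|s') Q(s',a')`. -/
noncomputable def Tpol {S A : Type*} [Fintype S] [Fintype A]
    (P : S → A → PMF S) (l : S → A → ℝ) (γ : ℝ) (π : S → PMF A)
    (Q : S × A → ℝ) : S × A → ℝ :=
  fun sa => l sa.1 sa.2 +
    γ * ∑ s' : S, (P sa.1 sa.2 s').toReal * ∑ a' : A, (π s' a').toReal * Q (s', a')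

/-- The state-action transition kernel of the Markov chain induced by policy `π`:
`K_π(s,a) = (P s a).bind (fun s' => (π s').map (fun a' => (s', a')))`. -/
noncomputable def Kpol {S A : Type*} (P : S → A → PMF S) (π : S → PMF A)
    (sa : S × A) : PMF (S × A) :=
  (P sa.1 sa.2).bind fun s' => (π s').map fun a' => (s', a')

/-- The marginal distributions of the induced state-action Markov chain started at
`sa`: `μ_0 = PMF.pure sa`, `μ_{k+1} = μ_k.bind K_π`. -/
noncomputable def muSeq {S A : Type*} (P : S → A → PMF S) (π : S → PMF A)
    (sa : S × A) : ℕ → PMF (S × A)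
  | 0 => PMF.pure sa
  | k + 1 => (muSeq P π sa k).bind (Kpol P π)

lemma pexp_Kpol {S A : Type*} [Fintype S] [Fintype A]
    (P : S → A → PMF S) (π : S → PMF A) (sa : S × A) (f : S × A → ℝ) :
    pexp (Kpol P π sa) f
      = ∑ s' : S, (P sa.1 sa.2 s').toReal * ∑ a' : A, (π s' a').toReal * f (s', a') := by
  rw [Kpol, pexp_bind]
  refine Finset.sum_congr rfl fun s' _ => ?_
  rw [pexp_map, pexp]

/-- The fixed point of the policy Bellman operator equals the discounted sum of
expected stage costs along the induced Markov chain: the series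
`∑_k γ^k ∑_{(s',a')} μ_k(s',a') l(s',a')` is summable with sum `Q^π(s,a)`. -/
theorem fixed_point_eq_discounted_expected_costs
    {S A : Type*} [Fintype S] [Fintype A] [Nonempty S] [Nonempty A]
    (P : S → A → PMF S) (l : S → A → ℝ) (γ : ℝ) (hγ0 : 0 ≤ γ) (hγ1 : γ < 1)
    (π : S → PMF A) (Qpi : S × A → ℝ) (hQpi : Tpol P l γ π Qpi = Qpi)
    (s : S) (a : A) :
    HasSum
      (fun k : ℕ => γ ^ k *
        ∑ sa' : S × A, (muSeq P π (s, a) k sa').toReal * l sa'.1 sa'.2)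
      (Qpi (s, a)) := by
  show HasSum
      (fun k : ℕ => γ ^ k * pexp (muSeq P π (s, a) k) (fun sa' => l sa'.1 sa'.2))
      (Qpi (s, a))
  set l' : S × A → ℝ := fun sa' => l sa'.1 sa'.2 with hl'
  set μ : ℕ → PMF (S × A) := muSeq P π (s, a) with hμ
  -- fixed point via expectations
  have hfix : ∀ sa : S × A, Qpi sa = l' sa + γ * pexp (Kpol P π sa) Qpi := by
    intro sa
    conv_lhs => rw [← hQpi]
    rw [Tpol, pexp_Kpol]
  -- key induction identity
  have hkey : ∀ n : ℕ,
      Qpi (s, a) = (∑ k ∈ Finset.range n, γ ^ k * pexp (μ k) l')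
        + γ ^ n * pexp (μ n) Qpi := by
    intro n
    induction n with
    | zero => simp [hμ, muSeq, pexp_pure]
    | succ n ih =>
      rw [ih]
      have h1 : pexp (μ n) Qpi
          = pexp (μ n) l' + γ * pexp (μ (n + 1)) Qpi := by
        have : pexp (μ n) Qpi
            = pexp (μ n) (fun sa => l' sa + γ * pexp (Kpol P π sa) Qpi) := by
          refine Finset.sum_congr rfl fun x _ => ?_
          congr 1
          exact hfix x
        rw [this, pexp_add, pexp_const_mul]
        congr 1
        show γ * pexp (μ n) (fun sa => pexp (Kpol P π sa) Qpi)
          = γ * pexp ((μ n).bind (Kpol P π)) Qpi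
        rw [pexp_bind]; rfl
      rw [Finset.sum_range_succ, h1]
      ring
  -- bounds
  obtain ⟨Ml, hMl0, hMl⟩ : ∃ M, 0 ≤ M ∧ ∀ x : S × A, |l' x| ≤ M := by
    refine ⟨Finset.univ.sup' Finset.univ_nonempty (fun x => |l' x|), ?_, ?_⟩
    · exact le_trans (abs_nonneg _) (Finset.le_sup' (f := fun x : S × A => |l' x|) (Finset.mem_univ (Classical.arbitrary _)))
    · intro x; exact Finset.le_sup' (f := fun x : S × A => |l' x|) (Finset.mem_univ x)
  obtain ⟨MQ, hMQ⟩ : ∃ M, ∀ x : S × A, |Qpi x| ≤ M := by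
    refine ⟨Finset.univ.sup' Finset.univ_nonempty (fun x => |Qpi x|), fun x => ?_⟩
    exact Finset.le_sup' (f := fun x : S × A => |Qpi x|) (Finset.mem_univ x)
  have hsummable : Summable (fun k : ℕ => γ ^ k * pexp (μ k) l') := by
    refine Summable.of_norm_bounded (g := fun k => Ml * γ ^ k)
      ((summable_geometric_of_lt_one hγ0 hγ1).mul_left Ml) fun k => ?_
    rw [norm_mul, norm_pow, Real.norm_eq_abs, Real.norm_eq_abs,
      abs_of_nonneg hγ0]
    calc γ ^ k * |pexp (μ k) l'| ≤ γ ^ k * Ml :=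
          mul_le_mul_of_nonneg_left (pexp_abs_le _ _ _ hMl) (pow_nonneg hγ0 k)
      _ = Ml * γ ^ k := mul_comm _ _
  rw [hsummable.hasSum_iff_tendsto_nat]
  have hrem : Filter.Tendsto (fun n => γ ^ n * pexp (μ n) Qpi)
      Filter.atTop (nhds 0) := by
    refine squeeze_zero_norm (fun n => ?_)
      (((tendsto_pow_atTop_nhds_zero_of_lt_one hγ0 hγ1).const_mul MQ).congr
        (fun n => rfl) |>.trans_eq (by simp))
    rw [norm_mul, norm_pow, Real.norm_eq_abs, Real.norm_eq_abs, abs_of_nonneg hγ0]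
    exact mul_le_mul_of_nonneg_left (pexp_abs_le _ _ _ hMQ) (pow_nonneg hγ0 n) |>.trans
      (le_of_eq (mul_comm _ _))
  have : (fun n => ∑ k ∈ Finset.range n, γ ^ k * pexp (μ k) l')
      = fun n => Qpi (s, a) - γ ^ n * pexp (μ n) Qpi := by
    funext n; rw [hkey n]; ring
  rw [this]
  simpa using (tendsto_const_nhds (x := Qpi (s, a))).sub hrem
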